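/- Let P be a lazy, irreducible, aperiodic Markov chain on a finite state space K with stationary distribution π, and let A ⊆ K with 0 < π(A) ≤ 1/2. Then ψ̄_mod(A) ≥ ∫₀¹ (π(A_u)/π(A))·log(π(A_u)/π(A)) du (with the convention 0·log 0 = 0). -/

import Mathlib

open Finset MeasureTheory

noncomputable section

attribute [local instance] Classical.propDecidable

variable {K : Type*} [Fintype K]

/-- `matPow P t u v` is the `t`-step transition probability from `u` to `v`. -/
def matPow (P : K → K → ℝ) : ℕ → K → K → ℝ
  | 0 => fun u v => if u = v then 1 else 0
  | (t + 1) => fun u v => ∑ w, matPow P t u w * P w v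

/-- `P` is a stochastic matrix with (strictly positive) stationary distribution `π`. -/
structure IsMarkov (P : K → K → ℝ) (π : K → ℝ) : Prop where
  nonneg : ∀ u v, 0 ≤ P u v
  rowSum : ∀ u, ∑ v, P u v = 1
  piPos : ∀ v, 0 < π v
  piSum : ∑ v, π v = 1
  stationary : ∀ v, ∑ u, π u * P u v = π v

/-- `P` is lazy: every holding probability is at least `1/2`. -/
def IsLazy (P : K → K → ℝ) : Prop := ∀ u, (1 : ℝ) / 2 ≤ P u u

/-- irreducibility: every state can reach every other state. -/
def MCIrreducible (P : K → K → ℝ) : Prop := ∀ u v : K, ∃ t : ℕ, 0 < matPow P t u v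

/-- aperiodicity: the gcd of the return times of every state is `1`. -/
def MCAperiodic (P : K → K → ℝ) : Prop :=
  ∀ u : K, ∀ d : ℕ, (∀ t : ℕ, 0 < matPow P t u u → d ∣ t) → d ≤ 1

/-- reversibility: the detailed balance condition. -/
def IsReversible (P : K → K → ℝ) (π : K → ℝ) : Prop :=
  ∀ u v, π u * P u v = π v * P v u

/-- `π`-measure of a set. -/
def meas (π : K → ℝ) (A : Finset K) : ℝ := ∑ v ∈ A, π v

/-- the time reversal `P̄(u,v) = π(v) P(v,u) / π(u)`. -/
def rev (P : K → K → ℝ) (π : K → ℝ) (u v : K) : ℝ := π v * P v u / π u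

/-- transition probability from a point into a set, w.r.t. kernel `R`. -/
def setProb (R : K → K → ℝ) (v : K) (C : Finset K) : ℝ := ∑ c ∈ C, R v c

/-- the level set `A_u = {y : R(y,A) > u}`, w.r.t. kernel `R`. -/
def levelSet (R : K → K → ℝ) (A : Finset K) (u : ℝ) : Finset K :=
  Finset.univ.filter (fun y => u < setProb R y A)

/-- `g` is a fractional subset of `S` of measure `t`. -/
def IsFracSub (π : K → ℝ) (S : Finset K) (g : K → ℝ) (t : ℝ) : Prop :=
  (∀ v, 0 ≤ g v ∧ g v ≤ 1) ∧ (∀ v ∉ S, g v = 0) ∧ ∑ v, g v * π v = t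

/-- ergodic flow from a fractional subset `g` into `C`, w.r.t. kernel `R`. -/
def fracFlow (R : K → K → ℝ) (π : K → ℝ) (g : K → ℝ) (C : Finset K) : ℝ :=
  ∑ v, g v * π v * setProb R v C

/-- `Ψ(t, Aᶜ)` w.r.t. kernel `R`: for `t ≤ π(A)` the minimal flow into `Aᶜ` from a
fractional subset of `A` of measure `t`; for `t > π(A)` the minimal flow into `A`
from a fractional subset of `Aᶜ` of measure `1 − t`. -/
def Psi (R : K → K → ℝ) (π : K → ℝ) (A : Finset K) (t : ℝ) : ℝ :=
  if t ≤ meas π A then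
    sInf {q : ℝ | ∃ g : K → ℝ, IsFracSub π A g t ∧ q = fracFlow R π g Aᶜ}
  else
    sInf {q : ℝ | ∃ g : K → ℝ, IsFracSub π Aᶜ g (1 - t) ∧ q = fracFlow R π g A}

/-- `Ψ_big(t, Aᶜ)` w.r.t. kernel `R`: maximal flow into `Aᶜ` from a fractional
subset of `A` of measure `t`. -/
def PsiSup (R : K → K → ℝ) (π : K → ℝ) (A : Finset K) (t : ℝ) : ℝ :=
  sSup {q : ℝ | ∃ g : K → ℝ, IsFracSub π A g t ∧ q = fracFlow R π g Aᶜ}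

/-- the spread `ψ⁺(A)` (w.r.t. kernel `R`). -/
def psiPlus (R : K → K → ℝ) (π : K → ℝ) (A : Finset K) : ℝ :=
  (∫ t in (0:ℝ)..(meas π A), Psi R π A t) / (meas π A) ^ 2

/-- the quantity `ψ⁻(A)` (w.r.t. kernel `R`). -/
def psiMinus (R : K → K → ℝ) (π : K → ℝ) (A : Finset K) : ℝ :=
  (∫ t in (meas π A)..(1:ℝ), Psi R π A t) / (meas π A) ^ 2

/-- the modified spread `ψ_mod(A)` (w.r.t. kernel `R`). -/
def psiMod (R : K → K → ℝ) (π : K → ℝ) (A : Finset K) : ℝ :=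
  (∫ t in (0:ℝ)..(1:ℝ), Psi R π A t / min t (1 - t)) / meas π A

/-- the global spread `ψ_gl(A)` (w.r.t. kernel `R`). -/
def psiGl (R : K → K → ℝ) (π : K → ℝ) (A : Finset K) : ℝ :=
  (∫ t in (0:ℝ)..(1:ℝ), Psi R π A t) / (meas π A) ^ 2

/-- the quantity `ψ_big(A)` (w.r.t. kernel `R`). -/
def psiBig (R : K → K → ℝ) (π : K → ℝ) (A : Finset K) : ℝ :=
  (∫ t in (0:ℝ)..(meas π A), PsiSup R π A t) / (meas π A) ^ 2

/-- the evolving-set quantity `ψ_evo(A)`, with level sets taken w.r.t. kernel `R`. -/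
def psiEvo (R : K → K → ℝ) (π : K → ℝ) (A : Finset K) : ℝ :=
  1 - ∫ u in (0:ℝ)..(1:ℝ), Real.sqrt (meas π (levelSet R A u) / meas π A)

/-- ergodic flow `Q(B,C)`. -/
def ergFlow (P : K → K → ℝ) (π : K → ℝ) (B C : Finset K) : ℝ :=
  ∑ u ∈ B, ∑ v ∈ C, π u * P u v

/-- conductance `Φ(A)`. -/
def conductance (P : K → K → ℝ) (π : K → ℝ) (A : Finset K) : ℝ :=
  ergFlow P π A Aᶜ / meas π A

def Qone (P : K → K → ℝ) (π : K → ℝ) (C D : Finset K) : ℝ :=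
  ∑ v ∈ C, setProb P v D * π v

def Qtwo (P : K → K → ℝ) (π : K → ℝ) (C D : Finset K) : ℝ :=
  ∑ v ∈ C, Real.sqrt (setProb P v D) * π v

def Qinfty (P : K → K → ℝ) (π : K → ℝ) (C D : Finset K) : ℝ :=
  meas π (C.filter (fun v => 0 < setProb P v D))

/-- discrete gradient `h₁⁺(A)`. -/
def hOneP (P : K → K → ℝ) (π : K → ℝ) (A : Finset K) : ℝ :=
  Qone P π A Aᶜ / min (meas π A) (meas π Aᶜ)

/-- discrete gradient `h₁⁻(A)`. -/
def hOneM (P : K → K → ℝ) (π : K → ℝ) (A : Finset K) : ℝ :=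
  Qone P π Aᶜ A / min (meas π A) (meas π Aᶜ)

/-- discrete gradient `h₂⁺(A)`. -/
def hTwoP (P : K → K → ℝ) (π : K → ℝ) (A : Finset K) : ℝ :=
  Qtwo P π A Aᶜ / min (meas π A) (meas π Aᶜ)

/-- discrete gradient `h₂⁻(A)`. -/
def hTwoM (P : K → K → ℝ) (π : K → ℝ) (A : Finset K) : ℝ :=
  Qtwo P π Aᶜ A / min (meas π A) (meas π Aᶜ)

/-- discrete gradient `h_∞⁺(A)`. -/
def hInfP (P : K → K → ℝ) (π : K → ℝ) (A : Finset K) : ℝ :=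
  Qinfty P π A Aᶜ / min (meas π A) (meas π Aᶜ)

/-- discrete gradient `h_∞⁻(A)`. -/
def hInfM (P : K → K → ℝ) (π : K → ℝ) (A : Finset K) : ℝ :=
  Qinfty P π Aᶜ A / min (meas π A) (meas π Aᶜ)

/-- `p` is a probability distribution. -/
def IsDist (p : K → ℝ) : Prop := (∀ v, 0 ≤ p v) ∧ ∑ v, p v = 1

/-- the distribution after `t` steps starting from `p`. -/
def stepDist (P : K → K → ℝ) (p : K → ℝ) (t : ℕ) (v : K) : ℝ :=
  ∑ u, p u * matPow P t u v

/-- total variation distance. -/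
def tvDist (μ π : K → ℝ) : ℝ := (1 / 2) * ∑ v, |μ v - π v|

/-- chi-square distance. -/
def chi2Dist (μ π : K → ℝ) : ℝ := ∑ v, (μ v / π v - 1) ^ 2 * π v

/-- total variation mixing time `τ(ε)`: the max over initial distributions of the
least time at which total variation distance drops to `ε`. -/
def mixTV (P : K → K → ℝ) (π : K → ℝ) (ε : ℝ) : ℕ :=
  sSup {n : ℕ | ∃ p : K → ℝ, IsDist p ∧
    n = sInf {t : ℕ | tvDist (stepDist P p t) π ≤ ε}}

/-- chi-square mixing time `χ²(ε)`. -/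
def mixChi2 (P : K → K → ℝ) (π : K → ℝ) (ε : ℝ) : ℕ :=
  sSup {n : ℕ | ∃ p : K → ℝ, IsDist p ∧
    n = sInf {t : ℕ | chi2Dist (stepDist P p t) π ≤ ε}}

/-- `π₀ = min_v π(v)`. -/
def piMin (π : K → ℝ) : ℝ := sInf {r : ℝ | ∃ v : K, r = π v}

/-- `ψ⁺(x)`: worst spread over sets of measure at most `x`. -/
def psiPlusSize (R : K → K → ℝ) (π : K → ℝ) (x : ℝ) : ℝ :=
  sInf {r : ℝ | ∃ A : Finset K, 0 < meas π A ∧ meas π A ≤ x ∧ r = psiPlus R π A}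

/-- `ψ_evo(x)`: worst evolving-set quantity over sets of measure at most `x`. -/
def psiEvoSize (R : K → K → ℝ) (π : K → ℝ) (x : ℝ) : ℝ :=
  sInf {r : ℝ | ∃ A : Finset K, 0 < meas π A ∧ meas π A ≤ x ∧ r = psiEvo R π A}

/-- `ψ_big(x)`: worst `ψ_big` over sets of measure at most `x`. -/
def psiBigSize (R : K → K → ℝ) (π : K → ℝ) (x : ℝ) : ℝ :=
  sInf {r : ℝ | ∃ A : Finset K, 0 < meas π A ∧ meas π A ≤ x ∧ r = psiBig R π A}

/-- Dirichlet form. -/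
def dirichletForm (P : K → K → ℝ) (π : K → ℝ) (f : K → ℝ) : ℝ :=
  (1 / 2) * ∑ u, ∑ v, π u * P u v * (f u - f v) ^ 2

/-- variance w.r.t. `π`. -/
def varPi (π : K → ℝ) (f : K → ℝ) : ℝ :=
  ∑ v, π v * f v ^ 2 - (∑ v, π v * f v) ^ 2

/-- the spectral gap `λ`. -/
def specGap (P : K → K → ℝ) (π : K → ℝ) : ℝ :=
  sInf {r : ℝ | ∃ f : K → ℝ, (∃ u v, f u ≠ f v) ∧ r = dirichletForm P π f / varPi π f}

/-- `P_* = 1 − min_{u ∈ A} P(u, A)`. -/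
def Pstar (P : K → K → ℝ) (A : Finset K) : ℝ :=
  1 - sInf {r : ℝ | ∃ u ∈ A, r = setProb P u A}

/-- `P_min = min {P(u,v)/π(v) : u ∈ A, v ∈ Aᶜ, P(u,v) > 0}`. -/
def PminEdge (P : K → K → ℝ) (π : K → ℝ) (A : Finset K) : ℝ :=
  sInf {r : ℝ | ∃ u ∈ A, ∃ v ∈ Aᶜ, 0 < P u v ∧ r = P u v / π v}

/-- `w(t) = inf {y ∈ [0,1] : π(A_y) ≤ t}`. -/
def wfun (R : K → K → ℝ) (π : K → ℝ) (A : Finset K) (t : ℝ) : ℝ :=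
  sInf {y : ℝ | y ∈ Set.Icc (0:ℝ) 1 ∧ meas π (levelSet R A y) ≤ t}


/-! ### Auxiliary lemmas for the proof -/

set_option linter.unusedSectionVars false

section Aux

variable (P : K → K → ℝ) (π : K → ℝ) (A : Finset K)

lemma meas_nonneg' (hpos : ∀ v, 0 < π v) (B : Finset K) : 0 ≤ meas π B :=
  Finset.sum_nonneg fun v _ => (hpos v).le

lemma meas_mono' (hpos : ∀ v, 0 < π v) {B C : Finset K} (h : B ⊆ C) :
    meas π B ≤ meas π C :=
  Finset.sum_le_sum_of_subset_of_nonneg h (fun v _ _ => (hpos v).le)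

lemma meas_univ (hsum : ∑ v, π v = 1) : meas π (Finset.univ : Finset K) = 1 := hsum

lemma meas_compl (hsum : ∑ v, π v = 1) (B : Finset K) : meas π Bᶜ = 1 - meas π B := by
  have := Finset.sum_add_sum_compl B π
  unfold meas; linarith [this, hsum]

lemma meas_le_one (hpos : ∀ v, 0 < π v) (hsum : ∑ v, π v = 1) (B : Finset K) :
    meas π B ≤ 1 := by
  have : meas π B ≤ meas π (Finset.univ : Finset K) :=
    meas_mono' π hpos (Finset.subset_univ B)
  rwa [meas_univ π hsum] at this

lemma rev_nonneg (hM : IsMarkov P π) (u v : K) : 0 ≤ rev P π u v :=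
  div_nonneg (mul_nonneg (hM.piPos v).le (hM.nonneg v u)) (hM.piPos u).le

lemma rev_rowsum (hM : IsMarkov P π) (v : K) : ∑ c, rev P π v c = 1 := by
  unfold rev
  rw [← Finset.sum_div]
  rw [show (∑ c, π c * P c v) = π v from hM.stationary v]
  exact div_self (hM.piPos v).ne'

lemma rev_diag (hM : IsMarkov P π) (v : K) : rev P π v v = P v v := by
  unfold rev
  rw [mul_comm, mul_div_assoc, div_self (hM.piPos v).ne', mul_one]

lemma setProb_nonneg (hM : IsMarkov P π) (v : K) (B : Finset K) :
    0 ≤ setProb (rev P π) v B :=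
  Finset.sum_nonneg fun c _ => rev_nonneg P π hM v c

lemma setProb_le_one (hM : IsMarkov P π) (v : K) (B : Finset K) :
    setProb (rev P π) v B ≤ 1 := by
  have h1 : setProb (rev P π) v B ≤ ∑ c, rev P π v c :=
    Finset.sum_le_sum_of_subset_of_nonneg (Finset.subset_univ B)
      (fun c _ _ => rev_nonneg P π hM v c)
  rwa [rev_rowsum P π hM v] at h1

lemma setProb_compl (hM : IsMarkov P π) (v : K) (B : Finset K) :
    setProb (rev P π) v Bᶜ = 1 - setProb (rev P π) v B := by
  have := Finset.sum_add_sum_compl B (rev P π v)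
  rw [rev_rowsum P π hM v] at this
  unfold setProb; linarith

lemma sum_pi_setProb (hM : IsMarkov P π) :
    ∑ y, π y * setProb (rev P π) y A = meas π A := by
  unfold setProb rev meas
  calc ∑ y, π y * ∑ c ∈ A, π c * P c y / π y
      = ∑ y, ∑ c ∈ A, π c * P c y := by
        refine Finset.sum_congr rfl fun y _ => ?_
        rw [Finset.mul_sum]
        refine Finset.sum_congr rfl fun c _ => ?_
        rw [mul_div_assoc', mul_comm, mul_div_assoc, div_self (hM.piPos y).ne', mul_one]
    _ = ∑ c ∈ A, ∑ y, π c * P c y := Finset.sum_comm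
    _ = ∑ c ∈ A, π c := by
        refine Finset.sum_congr rfl fun c _ => ?_
        rw [← Finset.mul_sum, hM.rowSum, mul_one]


lemma subset_levelSet (hM : IsMarkov P π) (hlazy : IsLazy P) {u : ℝ} (hu : u < 1/2) :
    A ⊆ levelSet (rev P π) A u := by
  intro v hv
  rw [levelSet, Finset.mem_filter]
  refine ⟨Finset.mem_univ v, lt_of_lt_of_le hu ?_⟩
  calc (1:ℝ)/2 ≤ P v v := hlazy v
    _ = rev P π v v := (rev_diag P π hM v).symm
    _ ≤ setProb (rev P π) v A := Finset.single_le_sum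
        (fun c (_ : c ∈ A) => rev_nonneg P π hM v c) hv

lemma levelSet_subset (hM : IsMarkov P π) (hlazy : IsLazy P) {u : ℝ} (hu : 1/2 ≤ u) :
    levelSet (rev P π) A u ⊆ A := by
  intro v hv
  rw [levelSet, Finset.mem_filter] at hv
  by_contra hvA
  have hva : v ∈ Aᶜ := Finset.mem_compl.2 hvA
  have h1 : rev P π v v ≤ setProb (rev P π) v Aᶜ :=
    Finset.single_le_sum (fun c (_ : c ∈ Aᶜ) => rev_nonneg P π hM v c) hva
  rw [setProb_compl P π hM, rev_diag P π hM] at h1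
  have := hlazy v
  have := hv.2
  linarith

lemma levelSet_anti {u u' : ℝ} (h : u ≤ u') :
    levelSet (rev P π) A u' ⊆ levelSet (rev P π) A u := by
  intro v hv
  rw [levelSet, Finset.mem_filter] at hv ⊢
  exact ⟨hv.1, lt_of_le_of_lt h hv.2⟩

lemma aFun_antitone (hpos : ∀ v, 0 < π v) :
    Antitone (fun u => meas π (levelSet (rev P π) A u)) :=
  fun _ _ h => meas_mono' π hpos (levelSet_anti P π A h)

lemma aFun_measurable (hpos : ∀ v, 0 < π v) :
    Measurable (fun u => meas π (levelSet (rev P π) A u)) :=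
  (aFun_antitone P π A hpos).measurable

lemma aFun_mem (hM : IsMarkov P π) (u : ℝ) :
    0 ≤ meas π (levelSet (rev P π) A u) ∧ meas π (levelSet (rev P π) A u) ≤ 1 :=
  ⟨meas_nonneg' π hM.piPos _, meas_le_one π hM.piPos hM.piSum _⟩

/-- bounded measurable functions are integrable on finite-measure sets. -/
lemma integrableOn_of_bdd {f : ℝ → ℝ} {s : Set ℝ} (hm : Measurable f)
    (hs : MeasurableSet s) (hμ : MeasureTheory.volume s ≠ ⊤) {C : ℝ}
    (hC : ∀ x ∈ s, |f x| ≤ C) : MeasureTheory.IntegrableOn f s := by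
  have hint : MeasureTheory.Integrable (fun _ : ℝ => C)
      (MeasureTheory.volume.restrict s) := by
    rw [MeasureTheory.integrable_const_iff]
    right
    refine ⟨?_⟩
    rw [MeasureTheory.Measure.restrict_apply_univ]
    exact hμ.lt_top
  refine hint.mono' hm.aestronglyMeasurable ?_
  refine Filter.eventually_iff_exists_mem.2 ⟨s, MeasureTheory.self_mem_ae_restrict hs, ?_⟩
  intro x hx
  simpa [Real.norm_eq_abs] using hC x hx

lemma indicator_integral {c a b : ℝ} (hab : a ≤ b) (h0 : a ≤ c) (h1 : c ≤ b) :
    ∫ u in Set.Ioc a b, (if u < c then (1:ℝ) else 0) = c - a := by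
  have hfun : (fun u : ℝ => if u < c then (1:ℝ) else 0) =
      Set.indicator (Set.Iio c) (fun _ => (1:ℝ)) := by
    funext u
    by_cases h : u < c <;> simp [Set.indicator, h]
  rw [hfun, MeasureTheory.setIntegral_indicator measurableSet_Iio]
  have hset : Set.Ioc a b ∩ Set.Iio c = Set.Ioo a c := by
    ext x
    simp only [Set.mem_inter_iff, Set.mem_Ioc, Set.mem_Iio, Set.mem_Ioo]
    constructor
    · rintro ⟨⟨hx1, _⟩, hx2⟩; exact ⟨hx1, hx2⟩
    · rintro ⟨hx1, hx2⟩; exact ⟨⟨hx1, le_trans hx2.le h1⟩, hx2⟩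
  rw [hset, MeasureTheory.setIntegral_const, Real.volume_real_Ioo_of_le h0, smul_eq_mul, mul_one]

lemma measurable_ind (c : ℝ) : Measurable (fun u : ℝ => if u < c then (1:ℝ) else 0) := by
  have : (fun u : ℝ => if u < c then (1:ℝ) else 0) =
      Set.indicator (Set.Iio c) (fun _ => (1:ℝ)) := by
    funext u
    by_cases h : u < c <;> simp [Set.indicator, h]
  rw [this]
  exact measurable_const.indicator measurableSet_Iio

/-- the central sum-integral swap. -/
lemma sum_eq_integral_levelSet (hM : IsMarkov P π) (w : K → ℝ) :
    ∑ v, w v * setProb (rev P π) v A =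
      ∫ u in Set.Ioc (0:ℝ) 1, ∑ v ∈ levelSet (rev P π) A u, w v := by
  have hrw : ∀ u : ℝ, (∑ v ∈ levelSet (rev P π) A u, w v) =
      ∑ v, w v * (if u < setProb (rev P π) v A then (1:ℝ) else 0) := by
    intro u
    rw [levelSet, Finset.sum_filter]
    refine Finset.sum_congr rfl fun v _ => ?_
    by_cases h : u < setProb (rev P π) v A <;> simp [h]
  simp only [hrw]
  rw [MeasureTheory.integral_finset_sum]
  · refine Finset.sum_congr rfl fun v _ => ?_
    rw [MeasureTheory.integral_const_mul]
    rw [indicator_integral (by norm_num) (setProb_nonneg P π hM v A)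
      (setProb_le_one P π hM v A), sub_zero]
  · intro v _
    refine integrableOn_of_bdd ((measurable_ind _).const_mul (w v)) measurableSet_Ioc
      (by simp) (C := |w v|) ?_
    intro x _
    by_cases h : x < setProb (rev P π) v A <;> simp [h, abs_nonneg]


lemma filter_mem_univ (B : Finset K) : Finset.univ.filter (fun v => v ∈ B) = B := by
  ext v; simp

lemma sum_ite_mem_mul (B : Finset K) (c : ℝ) (f : K → ℝ) :
    ∑ v, (if v ∈ B then c else 0) * f v = c * ∑ v ∈ B, f v := by
  rw [Finset.mul_sum, ← filter_mem_univ (K := K) B, Finset.sum_filter]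
  refine Finset.sum_congr rfl fun v _ => ?_
  by_cases h : v ∈ Finset.univ.filter (fun v => v ∈ B) <;>
    simp only [Finset.mem_filter] at h <;> by_cases h2 : v ∈ B <;> simp_all

lemma isFracSub_const (hpos : ∀ v, 0 < π v) (B : Finset K) {t : ℝ}
    (hB : 0 < meas π B) (h0 : 0 ≤ t) (h1 : t ≤ meas π B) :
    IsFracSub π B (fun v => if v ∈ B then t / meas π B else 0) t := by
  refine ⟨fun v => ?_, fun v hv => by simp [hv], ?_⟩
  · by_cases h : v ∈ B
    · simp only [h, if_true]
      exact ⟨div_nonneg h0 hB.le, (div_le_one hB).2 h1⟩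
    · simp [h]
  · rw [sum_ite_mem_mul]
    show t / meas π B * meas π B = t
    field_simp

lemma fracFlow_const (B C : Finset K) (c : ℝ) (R : K → K → ℝ) :
    fracFlow R π (fun v => if v ∈ B then c else 0) C =
      c * ∑ v ∈ B, π v * setProb R v C := by
  unfold fracFlow
  rw [← sum_ite_mem_mul (K := K) B c (fun v => π v * setProb R v C)]
  refine Finset.sum_congr rfl fun v _ => ?_
  by_cases h : v ∈ B <;> simp [h, mul_assoc]

lemma fracFlow_nonneg (hM : IsMarkov P π) {g : K → ℝ} (hg : ∀ v, 0 ≤ g v)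
    (C : Finset K) : 0 ≤ fracFlow (rev P π) π g C :=
  Finset.sum_nonneg fun v _ => mul_nonneg (mul_nonneg (hg v) (hM.piPos v).le)
    (setProb_nonneg P π hM v C)

lemma fracSub_total_nonneg (hM : IsMarkov P π) {B : Finset K} {g : K → ℝ} {t : ℝ}
    (hg : IsFracSub π B g t) : 0 ≤ t := by
  rw [← hg.2.2]
  exact Finset.sum_nonneg fun v _ => mul_nonneg (hg.1 v).1 (hM.piPos v).le

lemma W_measurable (w : K → ℝ) :
    Measurable (fun u : ℝ => ∑ v ∈ levelSet (rev P π) A u, w v) := by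
  have hrw : (fun u : ℝ => ∑ v ∈ levelSet (rev P π) A u, w v) =
      fun u => ∑ v, w v * (if u < setProb (rev P π) v A then (1:ℝ) else 0) := by
    funext u
    rw [levelSet, Finset.sum_filter]
    refine Finset.sum_congr rfl fun v _ => ?_
    by_cases h : u < setProb (rev P π) v A <;> simp [h]
  rw [hrw]
  exact Finset.measurable_sum _ fun v _ => (measurable_ind _).const_mul (w v)

lemma W_le_total {w : K → ℝ} (hw : ∀ v, 0 ≤ w v) (u : ℝ) :
    ∑ v ∈ levelSet (rev P π) A u, w v ≤ ∑ v, w v :=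
  Finset.sum_le_sum_of_subset_of_nonneg (Finset.subset_univ _) fun v _ _ => hw v

lemma W_nonneg {w : K → ℝ} (hw : ∀ v, 0 ≤ w v) (u : ℝ) :
    0 ≤ ∑ v ∈ levelSet (rev P π) A u, w v :=
  Finset.sum_nonneg fun v _ => hw v

lemma W_integrableOn {w : K → ℝ} (hw : ∀ v, 0 ≤ w v) {s : Set ℝ}
    (hs : MeasurableSet s) (hμ : MeasureTheory.volume s ≠ ⊤) :
    MeasureTheory.IntegrableOn (fun u : ℝ => ∑ v ∈ levelSet (rev P π) A u, w v) s := by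
  refine integrableOn_of_bdd (W_measurable P π A w) hs hμ (C := ∑ v, w v) ?_
  intro x _
  rw [abs_of_nonneg (W_nonneg P π A hw x)]
  exact W_le_total P π A hw x


lemma fracFlow_compl_eq (hM : IsMarkov P π) {g : K → ℝ} {t : ℝ}
    (hg : IsFracSub π A g t) :
    fracFlow (rev P π) π g Aᶜ = t - ∑ v, (g v * π v) * setProb (rev P π) v A := by
  unfold fracFlow
  have : ∀ v : K, g v * π v * setProb (rev P π) v Aᶜ =
      g v * π v - g v * π v * setProb (rev P π) v A := by
    intro v
    rw [setProb_compl P π hM]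
    ring
  simp only [this]
  rw [Finset.sum_sub_distrib, hg.2.2]

/-- Core lower bound 1: flow out of a fractional subset of `A`. -/
lemma flow_lb1 (hM : IsMarkov P π) (hlazy : IsLazy P) {g : K → ℝ} {t : ℝ}
    (hg : IsFracSub π A g t) :
    ∫ u in Set.Ioc (1/2:ℝ) 1, max (t - meas π (levelSet (rev P π) A u)) 0 ≤
      fracFlow (rev P π) π g Aᶜ := by
  set w : K → ℝ := fun v => g v * π v with hw
  have hw0 : ∀ v, 0 ≤ w v := fun v => mul_nonneg (hg.1 v).1 (hM.piPos v).le
  have hwt : ∑ v, w v = t := hg.2.2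
  have ht0 : 0 ≤ t := fracSub_total_nonneg P π hM hg
  -- step 1
  rw [fracFlow_compl_eq P π A hM hg]
  -- step 2: swap
  rw [sum_eq_integral_levelSet P π A hM w]
  -- step 3: split
  have hsplit : ∫ u in Set.Ioc (0:ℝ) 1, ∑ v ∈ levelSet (rev P π) A u, w v =
      (∫ u in Set.Ioc (0:ℝ) (1/2), ∑ v ∈ levelSet (rev P π) A u, w v) +
      ∫ u in Set.Ioc (1/2:ℝ) 1, ∑ v ∈ levelSet (rev P π) A u, w v := by
    rw [← MeasureTheory.setIntegral_union ((Set.Ioc_disjoint_Ioc_of_le le_rfl)) measurableSet_Ioc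
      (W_integrableOn P π A hw0 measurableSet_Ioc (by simp))
      (W_integrableOn P π A hw0 measurableSet_Ioc (by simp)),
      Set.Ioc_union_Ioc_eq_Ioc (by norm_num) (by norm_num)]
  rw [hsplit]
  -- step 4
  have h4 : ∫ u in Set.Ioc (0:ℝ) (1/2), ∑ v ∈ levelSet (rev P π) A u, w v ≤ t / 2 := by
    have := MeasureTheory.setIntegral_mono_on (s := Set.Ioc (0:ℝ) (1/2))
      (f := fun u => ∑ v ∈ levelSet (rev P π) A u, w v) (g := fun _ => t)
      (W_integrableOn P π A hw0 measurableSet_Ioc (by simp))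
      (MeasureTheory.integrableOn_const (by simp))
      measurableSet_Ioc
      (fun u _ => (hwt ▸ W_le_total P π A hw0 u : ∑ v ∈ levelSet (rev P π) A u, w v ≤ t))
    rw [MeasureTheory.setIntegral_const, Real.volume_real_Ioc_of_le (by norm_num), smul_eq_mul] at this
    linarith
  -- step 5
  have hminI : MeasureTheory.IntegrableOn
      (fun u : ℝ => min t (meas π (levelSet (rev P π) A u))) (Set.Ioc (1/2:ℝ) 1) := by
    refine integrableOn_of_bdd (measurable_const.min (aFun_measurable P π A hM.piPos))
      measurableSet_Ioc (by simp) (C := t) ?_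
    intro x _
    rw [abs_of_nonneg (le_min ht0 (meas_nonneg' π hM.piPos _))]
    exact min_le_left _ _
  have h5 : ∫ u in Set.Ioc (1/2:ℝ) 1, ∑ v ∈ levelSet (rev P π) A u, w v ≤
      ∫ u in Set.Ioc (1/2:ℝ) 1, min t (meas π (levelSet (rev P π) A u)) := by
    refine MeasureTheory.setIntegral_mono_on
      (W_integrableOn P π A hw0 measurableSet_Ioc (by simp)) hminI measurableSet_Ioc ?_
    intro u _
    refine le_min (hwt ▸ W_le_total P π A hw0 u) ?_
    refine le_trans (Finset.sum_le_sum (fun v _ => ?_)) (le_refl _)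
    -- w v ≤ π v on levelSet
    calc w v = g v * π v := rfl
      _ ≤ 1 * π v := mul_le_mul_of_nonneg_right (hg.1 v).2 (hM.piPos v).le
      _ = π v := one_mul _
  -- step 6: rewrite target integral
  have hmax : ∫ u in Set.Ioc (1/2:ℝ) 1, max (t - meas π (levelSet (rev P π) A u)) 0 =
      (t/2) - ∫ u in Set.Ioc (1/2:ℝ) 1, min t (meas π (levelSet (rev P π) A u)) := by
    have heq : (fun u : ℝ => max (t - meas π (levelSet (rev P π) A u)) 0) =
        fun u => t - min t (meas π (levelSet (rev P π) A u)) := by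
      funext u
      rcases le_total t (meas π (levelSet (rev P π) A u)) with h | h
      · rw [min_eq_left h, max_eq_right (by linarith), sub_self]
      · rw [min_eq_right h, max_eq_left (by linarith)]
    rw [heq, MeasureTheory.integral_sub
      (MeasureTheory.integrableOn_const (s := Set.Ioc (1/2:ℝ) 1) (C := t) (by simp)) hminI,
      MeasureTheory.setIntegral_const, Real.volume_real_Ioc_of_le (by norm_num), smul_eq_mul]
    ring_nf
  rw [hmax]
  linarith

/-- Core lower bound 2: flow into `A` from a fractional subset of `Aᶜ`. -/
lemma flow_lb2 (hM : IsMarkov P π) (hlazy : IsLazy P) {g : K → ℝ} {t : ℝ}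
    (hg : IsFracSub π Aᶜ g (1 - t)) :
    ∫ u in Set.Ioo (0:ℝ) (1/2), max (meas π (levelSet (rev P π) A u) - t) 0 ≤
      fracFlow (rev P π) π g A := by
  set w : K → ℝ := fun v => g v * π v with hw
  have hw0 : ∀ v, 0 ≤ w v := fun v => mul_nonneg (hg.1 v).1 (hM.piPos v).le
  have hwt : ∑ v, w v = 1 - t := hg.2.2
  have hflow : fracFlow (rev P π) π g A = ∑ v, w v * setProb (rev P π) v A := by
    unfold fracFlow; rfl
  rw [hflow, sum_eq_integral_levelSet P π A hM w]
  have hsplit : ∫ u in Set.Ioc (0:ℝ) 1, ∑ v ∈ levelSet (rev P π) A u, w v =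
      (∫ u in Set.Ioc (0:ℝ) (1/2), ∑ v ∈ levelSet (rev P π) A u, w v) +
      ∫ u in Set.Ioc (1/2:ℝ) 1, ∑ v ∈ levelSet (rev P π) A u, w v := by
    rw [← MeasureTheory.setIntegral_union ((Set.Ioc_disjoint_Ioc_of_le le_rfl)) measurableSet_Ioc
      (W_integrableOn P π A hw0 measurableSet_Ioc (by simp))
      (W_integrableOn P π A hw0 measurableSet_Ioc (by simp)),
      Set.Ioc_union_Ioc_eq_Ioc (by norm_num) (by norm_num)]
  rw [hsplit]
  have h2 : (0:ℝ) ≤ ∫ u in Set.Ioc (1/2:ℝ) 1, ∑ v ∈ levelSet (rev P π) A u, w v :=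
    MeasureTheory.setIntegral_nonneg measurableSet_Ioc (fun u _ => W_nonneg P π A hw0 u)
  have h1 : ∫ u in Set.Ioo (0:ℝ) (1/2), max (meas π (levelSet (rev P π) A u) - t) 0 ≤
      ∫ u in Set.Ioc (0:ℝ) (1/2), ∑ v ∈ levelSet (rev P π) A u, w v := by
    rw [MeasureTheory.integral_Ioc_eq_integral_Ioo]
    refine MeasureTheory.setIntegral_mono_on ?_
      ((W_integrableOn P π A hw0 measurableSet_Ioc (by simp)).mono_set Set.Ioo_subset_Ioc_self)
      measurableSet_Ioo ?_
    · refine integrableOn_of_bdd ?_ measurableSet_Ioo (by simp) (C := 1 - t) ?_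
      · exact ((aFun_measurable P π A hM.piPos).sub measurable_const).max measurable_const
      · intro x _
        have ht0 : 0 ≤ 1 - t := fracSub_total_nonneg P π hM hg
        rw [abs_of_nonneg (le_max_right _ _)]
        rcases le_total (meas π (levelSet (rev P π) A x) - t) 0 with h | h
        · rw [max_eq_right h]; linarith
        · rw [max_eq_left h]
          have h1 := meas_le_one π hM.piPos hM.piSum (levelSet (rev P π) A x)
          linarith
    · intro u hu
      -- u ∈ Ioo 0 (1/2) : A ⊆ A_u
      have hAu : A ⊆ levelSet (rev P π) A u := subset_levelSet P π A hM hlazy hu.2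
      have hWn := W_nonneg P π A hw0 u
      refine max_le ?_ hWn
      -- a u - t ≤ W u
      -- ∑_{lsᶜ} w ≤ 1 - a u
      have hcompl : ∑ v ∈ (levelSet (rev P π) A u)ᶜ, w v ≤
          1 - meas π (levelSet (rev P π) A u) := by
        rw [← meas_compl π hM.piSum]
        refine le_trans (Finset.sum_le_sum (fun v hv => ?_)) (le_refl _)
        show w v ≤ π v
        by_cases hvA : v ∈ A
        · -- v ∈ A ⊆ A_u, contradiction with v ∈ A_uᶜ
          exact absurd (hAu hvA) (Finset.mem_compl.1 hv)
        · calc w v = g v * π v := rfl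
            _ ≤ 1 * π v := mul_le_mul_of_nonneg_right (hg.1 v).2 (hM.piPos v).le
            _ = π v := one_mul _
      have htot := Finset.sum_add_sum_compl (levelSet (rev P π) A u) w
      rw [hwt] at htot
      linarith
  linarith


lemma isFracSub_smul {B : Finset K} {g : K → ℝ} {t : ℝ} (hg : IsFracSub π B g t)
    {c : ℝ} (h0 : 0 ≤ c) (h1 : c ≤ 1) : IsFracSub π B (fun v => c * g v) (c * t) := by
  refine ⟨fun v => ⟨mul_nonneg h0 (hg.1 v).1, ?_⟩, fun v hv => by simp [hg.2.1 v hv], ?_⟩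
  · calc c * g v ≤ 1 * 1 := mul_le_mul h1 (hg.1 v).2 (hg.1 v).1 zero_le_one
      _ = 1 := one_mul 1
  · rw [← hg.2.2, Finset.mul_sum]
    exact Finset.sum_congr rfl fun v _ => by ring

lemma fracFlow_smul (R : K → K → ℝ) (g : K → ℝ) (C : Finset K) (c : ℝ) :
    fracFlow R π (fun v => c * g v) C = c * fracFlow R π g C := by
  unfold fracFlow
  rw [Finset.mul_sum]
  exact Finset.sum_congr rfl fun v _ => by ring

lemma S1_nonempty (hM : IsMarkov P π) (hA0 : 0 < meas π A) {t : ℝ}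
    (h0 : 0 ≤ t) (h1 : t ≤ meas π A) :
    {q : ℝ | ∃ g : K → ℝ, IsFracSub π A g t ∧ q = fracFlow (rev P π) π g Aᶜ}.Nonempty :=
  ⟨_, ⟨_, isFracSub_const π hM.piPos A hA0 h0 h1, rfl⟩⟩

lemma S2_nonempty (hM : IsMarkov P π) (hA : meas π A ≤ 1/2) {t : ℝ}
    (h0 : t ≤ 1) (h1 : meas π A ≤ t) :
    {q : ℝ | ∃ g : K → ℝ, IsFracSub π Aᶜ g (1-t) ∧ q = fracFlow (rev P π) π g A}.Nonempty := by
  refine ⟨_, ⟨_, isFracSub_const π hM.piPos Aᶜ ?_ (by linarith) ?_, rfl⟩⟩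
  · rw [meas_compl π hM.piSum]; linarith
  · rw [meas_compl π hM.piSum]; linarith

lemma S1_bddBelow (hM : IsMarkov P π) (t : ℝ) :
    BddBelow {q : ℝ | ∃ g : K → ℝ, IsFracSub π A g t ∧ q = fracFlow (rev P π) π g Aᶜ} :=
  ⟨0, by rintro q ⟨g, hg, rfl⟩; exact fracFlow_nonneg P π hM (fun v => (hg.1 v).1) _⟩

lemma S2_bddBelow (hM : IsMarkov P π) (t : ℝ) :
    BddBelow {q : ℝ | ∃ g : K → ℝ, IsFracSub π Aᶜ g (1-t) ∧ q = fracFlow (rev P π) π g A} :=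
  ⟨0, by rintro q ⟨g, hg, rfl⟩; exact fracFlow_nonneg P π hM (fun v => (hg.1 v).1) _⟩

lemma psi_eq1 {t : ℝ} (ht : t ≤ meas π A) : Psi (rev P π) π A t =
    sInf {q : ℝ | ∃ g : K → ℝ, IsFracSub π A g t ∧ q = fracFlow (rev P π) π g Aᶜ} := by
  rw [Psi, if_pos ht]

lemma psi_eq2 {t : ℝ} (ht : ¬ (t ≤ meas π A)) : Psi (rev P π) π A t =
    sInf {q : ℝ | ∃ g : K → ℝ, IsFracSub π Aᶜ g (1-t) ∧ q = fracFlow (rev P π) π g A} := by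
  rw [Psi, if_neg ht]

lemma psi_lb1 (hM : IsMarkov P π) (hlazy : IsLazy P) (hA0 : 0 < meas π A) {t : ℝ}
    (h0 : 0 ≤ t) (h1 : t ≤ meas π A) :
    ∫ u in Set.Ioc (1/2:ℝ) 1, max (t - meas π (levelSet (rev P π) A u)) 0 ≤
      Psi (rev P π) π A t := by
  rw [psi_eq1 P π A h1]
  refine le_csInf (S1_nonempty P π A hM hA0 h0 h1) ?_
  rintro q ⟨g, hg, rfl⟩
  exact flow_lb1 P π A hM hlazy hg

lemma psi_lb2 (hM : IsMarkov P π) (hlazy : IsLazy P) (hA : meas π A ≤ 1/2) {t : ℝ}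
    (h0 : t ≤ 1) (h1 : meas π A < t) :
    ∫ u in Set.Ioo (0:ℝ) (1/2), max (meas π (levelSet (rev P π) A u) - t) 0 ≤
      Psi (rev P π) π A t := by
  rw [psi_eq2 P π A (not_le.2 h1)]
  refine le_csInf (S2_nonempty P π A hM hA h0 h1.le) ?_
  rintro q ⟨g, hg, rfl⟩
  exact flow_lb2 P π A hM hlazy hg

lemma psi_nonneg1 (hM : IsMarkov P π) (hA0 : 0 < meas π A) {t : ℝ}
    (h0 : 0 ≤ t) (h1 : t ≤ meas π A) : 0 ≤ Psi (rev P π) π A t := by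
  rw [psi_eq1 P π A h1]
  refine le_csInf (S1_nonempty P π A hM hA0 h0 h1) ?_
  rintro q ⟨g, hg, rfl⟩
  exact fracFlow_nonneg P π hM (fun v => (hg.1 v).1) _

lemma psi_nonneg2 (hM : IsMarkov P π) (hA : meas π A ≤ 1/2) {t : ℝ}
    (h0 : t ≤ 1) (h1 : meas π A < t) : 0 ≤ Psi (rev P π) π A t := by
  rw [psi_eq2 P π A (not_le.2 h1)]
  refine le_csInf (S2_nonempty P π A hM hA h0 h1.le) ?_
  rintro q ⟨g, hg, rfl⟩
  exact fracFlow_nonneg P π hM (fun v => (hg.1 v).1) _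

lemma psi_ub1 (hM : IsMarkov P π) (hA0 : 0 < meas π A) {t : ℝ}
    (h0 : 0 ≤ t) (h1 : t ≤ meas π A) : Psi (rev P π) π A t ≤ t := by
  rw [psi_eq1 P π A h1]
  refine le_trans (csInf_le (S1_bddBelow P π A hM t)
    ⟨_, isFracSub_const π hM.piPos A hA0 h0 h1, rfl⟩) ?_
  rw [fracFlow_const π A Aᶜ _ (rev P π)]
  have hsum : ∑ v ∈ A, π v * setProb (rev P π) v Aᶜ ≤ meas π A := by
    refine le_trans (Finset.sum_le_sum (fun v _ => ?_)) (le_refl _)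
    calc π v * setProb (rev P π) v Aᶜ ≤ π v * 1 :=
          mul_le_mul_of_nonneg_left (setProb_le_one P π hM v Aᶜ) (hM.piPos v).le
      _ = π v := mul_one _
  calc t / meas π A * ∑ v ∈ A, π v * setProb (rev P π) v Aᶜ
      ≤ t / meas π A * meas π A :=
        mul_le_mul_of_nonneg_left hsum (div_nonneg h0 hA0.le)
    _ = t := by field_simp

lemma psi_ub2 (hM : IsMarkov P π) (hA : meas π A ≤ 1/2) {t : ℝ}
    (h0 : t ≤ 1) (h1 : meas π A < t) : Psi (rev P π) π A t ≤ 1 - t := by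
  have hAc : meas π Aᶜ = 1 - meas π A := meas_compl π hM.piSum A
  have hAc0 : 0 < meas π Aᶜ := by rw [hAc]; linarith
  rw [psi_eq2 P π A (not_le.2 h1)]
  refine le_trans (csInf_le (S2_bddBelow P π A hM t)
    ⟨_, isFracSub_const π hM.piPos Aᶜ hAc0 (by linarith) (by rw [hAc]; linarith), rfl⟩) ?_
  rw [fracFlow_const π Aᶜ A _ (rev P π)]
  have hsum : ∑ v ∈ Aᶜ, π v * setProb (rev P π) v A ≤ meas π Aᶜ := by
    refine le_trans (Finset.sum_le_sum (fun v _ => ?_)) (le_refl _)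
    calc π v * setProb (rev P π) v A ≤ π v * 1 :=
          mul_le_mul_of_nonneg_left (setProb_le_one P π hM v A) (hM.piPos v).le
      _ = π v := mul_one _
  calc (1-t) / meas π Aᶜ * ∑ v ∈ Aᶜ, π v * setProb (rev P π) v A
      ≤ (1-t) / meas π Aᶜ * meas π Aᶜ :=
        mul_le_mul_of_nonneg_left hsum (div_nonneg (by linarith) hAc0.le)
    _ = 1 - t := by field_simp

/-- scaled comparison for the first branch (monotonicity). -/
lemma S1_sInf_mono (hM : IsMarkov P π) (hA0 : 0 < meas π A) {s t : ℝ}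
    (h0 : 0 ≤ s) (hst : s ≤ t) (htm : t ≤ meas π A) :
    sInf {q : ℝ | ∃ g : K → ℝ, IsFracSub π A g s ∧ q = fracFlow (rev P π) π g Aᶜ} ≤
    sInf {q : ℝ | ∃ g : K → ℝ, IsFracSub π A g t ∧ q = fracFlow (rev P π) π g Aᶜ} := by
  refine le_csInf (S1_nonempty P π A hM hA0 (le_trans h0 hst) htm) ?_
  rintro q ⟨g, hg, rfl⟩
  by_cases ht : t = 0
  · have hs : s = 0 := le_antisymm (ht ▸ hst) h0
    refine csInf_le (S1_bddBelow P π A hM s) ⟨g, ?_, rfl⟩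
    rwa [hs, ← ht]
  · have ht0 : 0 < t := lt_of_le_of_ne (le_trans h0 hst) (Ne.symm ht)
    have hc0 : 0 ≤ s / t := div_nonneg h0 ht0.le
    have hc1 : s / t ≤ 1 := (div_le_one ht0).2 hst
    have hmem : s / t * t = s := by field_simp
    refine le_trans (csInf_le (S1_bddBelow P π A hM s)
      ⟨_, hmem ▸ isFracSub_smul π hg hc0 hc1, rfl⟩) ?_
    rw [fracFlow_smul]
    exact mul_le_of_le_one_left (fracFlow_nonneg P π hM (fun v => (hg.1 v).1) _) hc1

/-- scaled comparison for the second branch (antitonicity). -/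
lemma S2_sInf_anti (hM : IsMarkov P π) (hA : meas π A ≤ 1/2) {s t : ℝ}
    (h0 : meas π A ≤ s) (hst : s ≤ t) (ht1 : t ≤ 1) :
    sInf {q : ℝ | ∃ g : K → ℝ, IsFracSub π Aᶜ g (1-t) ∧ q = fracFlow (rev P π) π g A} ≤
    sInf {q : ℝ | ∃ g : K → ℝ, IsFracSub π Aᶜ g (1-s) ∧ q = fracFlow (rev P π) π g A} := by
  refine le_csInf (S2_nonempty P π A hM hA (le_trans hst ht1) h0) ?_
  rintro q ⟨g, hg, rfl⟩
  by_cases hs : s = 1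
  · have htt : t = 1 := le_antisymm ht1 (hs ▸ hst)
    refine csInf_le (S2_bddBelow P π A hM t) ⟨g, ?_, rfl⟩
    have he : (1:ℝ) - t = 1 - s := by rw [htt, hs]
    rwa [he]
  · have hs1 : 1 - s > 0 := by
      rcases lt_or_eq_of_le (le_trans hst ht1) with h | h
      · linarith
      · exact absurd h hs
    have hc0 : 0 ≤ (1-t) / (1-s) := div_nonneg (by linarith) hs1.le
    have hc1 : (1-t) / (1-s) ≤ 1 := (div_le_one hs1).2 (by linarith)
    have hmem : (1-t) / (1-s) * (1-s) = 1-t := by field_simp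
    refine le_trans (csInf_le (S2_bddBelow P π A hM t)
      ⟨_, hmem ▸ isFracSub_smul π hg hc0 hc1, rfl⟩) ?_
    rw [fracFlow_smul]
    exact mul_le_of_le_one_left (fracFlow_nonneg P π hM (fun v => (hg.1 v).1) _) hc1


lemma psiF_mono (hM : IsMarkov P π) (hA0 : 0 < meas π A) :
    Monotone (fun t : ℝ => Psi (rev P π) π A (max 0 (min t (meas π A)))) := by
  intro s t hst
  simp only
  have hsm : max 0 (min s (meas π A)) ≤ meas π A :=
    max_le hA0.le (min_le_right _ _)
  have htm : max 0 (min t (meas π A)) ≤ meas π A :=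
    max_le hA0.le (min_le_right _ _)
  rw [psi_eq1 P π A hsm, psi_eq1 P π A htm]
  exact S1_sInf_mono P π A hM hA0 (le_max_left _ _)
    (max_le_max (le_refl 0) (min_le_min_right _ hst)) htm

lemma psiH_anti (hM : IsMarkov P π) (hA : meas π A ≤ 1/2) :
    Antitone (fun t : ℝ => sInf {q : ℝ | ∃ g : K → ℝ,
      IsFracSub π Aᶜ g (1 - max t (meas π A)) ∧ q = fracFlow (rev P π) π g A}) := by
  intro s t hst
  simp only
  by_cases ht1 : max t (meas π A) ≤ 1
  · exact S2_sInf_anti P π A hM hA (le_max_right _ _)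
      (max_le_max hst (le_refl _)) ht1
  · have hempty : {q : ℝ | ∃ g : K → ℝ,
        IsFracSub π Aᶜ g (1 - max t (meas π A)) ∧ q = fracFlow (rev P π) π g A} = ∅ := by
      ext q
      simp only [Set.mem_setOf_eq, Set.mem_empty_iff_false, iff_false]
      rintro ⟨g, hg, rfl⟩
      have := fracSub_total_nonneg P π hM hg
      have := not_le.1 ht1
      linarith
    rw [hempty, Real.sInf_empty]
    by_cases hs1 : max s (meas π A) ≤ 1
    · refine le_csInf (S2_nonempty P π A hM hA hs1 (le_max_right _ _)) ?_
      rintro q ⟨g, hg, rfl⟩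
      exact fracFlow_nonneg P π hM (fun v => (hg.1 v).1) _
    · have hempty2 : {q : ℝ | ∃ g : K → ℝ,
          IsFracSub π Aᶜ g (1 - max s (meas π A)) ∧ q = fracFlow (rev P π) π g A} = ∅ := by
        ext q
        simp only [Set.mem_setOf_eq, Set.mem_empty_iff_false, iff_false]
        rintro ⟨g, hg, rfl⟩
        have := fracSub_total_nonneg P π hM hg
        have := not_le.1 hs1
        linarith
      rw [hempty2, Real.sInf_empty]

lemma psi_div_integrable1 (hM : IsMarkov P π) (hA0 : 0 < meas π A)
    (hA : meas π A ≤ 1/2) :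
    MeasureTheory.IntegrableOn (fun t => Psi (rev P π) π A t / min t (1 - t))
      (Set.Ioc (0:ℝ) (meas π A)) := by
  have hclamp : ∀ x ∈ Set.Ioc (0:ℝ) (meas π A), max 0 (min x (meas π A)) = x := by
    intro x hx
    rw [min_eq_left hx.2, max_eq_right hx.1.le]
  have hF : Measurable (fun t : ℝ => Psi (rev P π) π A (max 0 (min t (meas π A)))) :=
    (psiF_mono P π A hM hA0).measurable
  have hmeas : Measurable (fun t : ℝ =>
      Psi (rev P π) π A (max 0 (min t (meas π A))) / min t (1 - t)) :=
    hF.div (measurable_id.min (measurable_const.sub measurable_id))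
  have hbdd : MeasureTheory.IntegrableOn
      (fun t : ℝ => Psi (rev P π) π A (max 0 (min t (meas π A))) / min t (1 - t))
      (Set.Ioc (0:ℝ) (meas π A)) := by
    refine integrableOn_of_bdd hmeas measurableSet_Ioc (by simp) (C := 1) ?_
    intro x hx
    rw [hclamp x hx]
    have hx0 : 0 < x := hx.1
    have hxm : x ≤ meas π A := hx.2
    have hmin : min x (1 - x) = x := min_eq_left (by linarith)
    rw [hmin, abs_of_nonneg (div_nonneg (psi_nonneg1 P π A hM hA0 hx0.le hxm) hx0.le)]
    exact div_le_one_of_le₀ (psi_ub1 P π A hM hA0 hx0.le hxm) hx0.le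
  refine hbdd.congr ?_
  refine Filter.eventually_of_mem
    (MeasureTheory.self_mem_ae_restrict measurableSet_Ioc) ?_
  intro x hx
  simp only
  rw [hclamp x hx]

lemma psi_div_integrable2 (hM : IsMarkov P π) (hA0 : 0 < meas π A)
    (hA : meas π A ≤ 1/2) :
    MeasureTheory.IntegrableOn (fun t => Psi (rev P π) π A t / min t (1 - t))
      (Set.Ioc (meas π A) 1) := by
  set m := meas π A with hm
  have hH : Measurable (fun t : ℝ => sInf {q : ℝ | ∃ g : K → ℝ,
      IsFracSub π Aᶜ g (1 - max t m) ∧ q = fracFlow (rev P π) π g A}) :=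
    (psiH_anti P π A hM hA).measurable
  have hmeas : Measurable (fun t : ℝ => sInf {q : ℝ | ∃ g : K → ℝ,
      IsFracSub π Aᶜ g (1 - max t m) ∧ q = fracFlow (rev P π) π g A} / min t (1 - t)) :=
    hH.div (measurable_id.min (measurable_const.sub measurable_id))
  have hclamp : ∀ x ∈ Set.Ioc m (1:ℝ), Psi (rev P π) π A x =
      sInf {q : ℝ | ∃ g : K → ℝ,
        IsFracSub π Aᶜ g (1 - max x m) ∧ q = fracFlow (rev P π) π g A} := by
    intro x hx
    rw [max_eq_left hx.1.le, psi_eq2 P π A (not_le.2 hx.1)]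
  have hbdd : MeasureTheory.IntegrableOn (fun t : ℝ => sInf {q : ℝ | ∃ g : K → ℝ,
      IsFracSub π Aᶜ g (1 - max t m) ∧ q = fracFlow (rev P π) π g A} / min t (1 - t))
      (Set.Ioc m 1) := by
    refine integrableOn_of_bdd hmeas measurableSet_Ioc (by simp) (C := 1/m) ?_
    intro x hx
    rw [← hclamp x hx]
    have hxm : m < x := hx.1
    have hx1 : x ≤ 1 := hx.2
    have h0 : 0 ≤ Psi (rev P π) π A x := psi_nonneg2 P π A hM hA hx1 hxm
    have hub : Psi (rev P π) π A x ≤ 1 - x := psi_ub2 P π A hM hA hx1 hxm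
    have hmin0 : 0 ≤ min x (1 - x) := le_min (by linarith) (by linarith)
    rw [abs_of_nonneg (div_nonneg h0 hmin0)]
    rcases eq_or_lt_of_le hx1 with heq | hlt
    · have : Psi (rev P π) π A x = 0 := le_antisymm (by rw [← heq] at hub; linarith) h0
      rw [this, zero_div]
      positivity
    · have hminlb : m * (1 - x) ≤ min x (1 - x) := by
        rcases min_cases x (1 - x) with ⟨hc, _⟩ | ⟨hc, _⟩ <;> rw [hc] <;> nlinarith
      have : Psi (rev P π) π A x / min x (1 - x) ≤ (1 - x) / (m * (1 - x)) :=
        div_le_div₀ (by linarith) hub (by nlinarith) hminlb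
      refine le_trans this ?_
      rw [mul_comm, ← div_div]
      rw [div_self (by linarith : (1:ℝ) - x ≠ 0)]
  refine hbdd.congr ?_
  refine Filter.eventually_of_mem
    (MeasureTheory.self_mem_ae_restrict measurableSet_Ioc) ?_
  intro x hx
  simp only
  rw [← hclamp x hx]


/-- bounded measurable functions on finite-measure product rectangles are integrable. -/
lemma integrable_prod_of_bdd {f : ℝ × ℝ → ℝ} (hf : Measurable f) {s s' : Set ℝ}
    (hs : MeasurableSet s) (hs' : MeasurableSet s')
    (hμ : MeasureTheory.volume s ≠ ⊤) (hμ' : MeasureTheory.volume s' ≠ ⊤) {C : ℝ}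
    (hC : ∀ p ∈ s ×ˢ s', |f p| ≤ C) :
    MeasureTheory.Integrable f
      ((MeasureTheory.volume.restrict s).prod (MeasureTheory.volume.restrict s')) := by
  have hconst : MeasureTheory.Integrable (fun _ : ℝ × ℝ => C)
      ((MeasureTheory.volume.restrict s).prod (MeasureTheory.volume.restrict s')) := by
    rw [MeasureTheory.integrable_const_iff]
    right
    refine ⟨?_⟩
    rw [← Set.univ_prod_univ, MeasureTheory.Measure.prod_prod,
      MeasureTheory.Measure.restrict_apply_univ, MeasureTheory.Measure.restrict_apply_univ]
    exact ENNReal.mul_lt_top hμ.lt_top hμ'.lt_top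
  refine hconst.mono' hf.aestronglyMeasurable ?_
  rw [MeasureTheory.Measure.prod_restrict]
  refine Filter.eventually_of_mem
    (MeasureTheory.self_mem_ae_restrict (hs.prod hs')) ?_
  intro p hp
  simpa [Real.norm_eq_abs] using hC p hp

lemma f1_bounds {t c : ℝ} (hc : 0 ≤ c) :
    0 ≤ max (t - c) 0 / t ∧ max (t - c) 0 / t ≤ 1 := by
  rcases lt_trichotomy t 0 with ht | ht | ht
  · rw [max_eq_right (by linarith : t - c ≤ 0), zero_div]
    exact ⟨le_refl 0, zero_le_one⟩
  · subst ht
    rw [div_zero]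
    exact ⟨le_refl 0, zero_le_one⟩
  · constructor
    · exact div_nonneg (le_max_right _ _) ht.le
    · rw [div_le_one ht]
      exact max_le (by linarith) ht.le

lemma f2_bounds {t c m : ℝ} (hc0 : 0 ≤ c) (hc1 : c ≤ 1) (hm : 0 < m) (ht : m < t) :
    0 ≤ max (c - t) 0 / t ∧ max (c - t) 0 / t ≤ 1/m := by
  have ht0 : 0 < t := lt_trans hm ht
  constructor
  · exact div_nonneg (le_max_right _ _) ht0.le
  · rw [div_le_div_iff₀ ht0 hm]
    have h1 : max (c - t) 0 ≤ 1 := max_le (by linarith) zero_le_one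
    nlinarith

lemma f1_measurable (hpos : ∀ v, 0 < π v) :
    Measurable (fun p : ℝ × ℝ =>
      max (p.1 - meas π (levelSet (rev P π) A p.2)) 0 / p.1) := by
  refine Measurable.div ?_ measurable_fst
  exact (measurable_fst.sub ((aFun_measurable P π A hpos).comp measurable_snd)).max
    measurable_const

lemma f2_measurable (hpos : ∀ v, 0 < π v) :
    Measurable (fun p : ℝ × ℝ =>
      max (meas π (levelSet (rev P π) A p.2) - p.1) 0 / p.1) := by
  refine Measurable.div ?_ measurable_fst
  exact (((aFun_measurable P π A hpos).comp measurable_snd).sub measurable_fst).max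
    measurable_const

lemma fubini1 (hM : IsMarkov P π) (hA0 : 0 < meas π A) :
    ∫ t in Set.Ioc (0:ℝ) (meas π A),
        (∫ u in Set.Ioc (1/2:ℝ) 1,
          max (t - meas π (levelSet (rev P π) A u)) 0 / t) =
    ∫ u in Set.Ioc (1/2:ℝ) 1,
        (∫ t in Set.Ioc (0:ℝ) (meas π A),
          max (t - meas π (levelSet (rev P π) A u)) 0 / t) := by
  refine MeasureTheory.integral_integral_swap ?_
  refine integrable_prod_of_bdd (f1_measurable P π A hM.piPos) measurableSet_Ioc
    measurableSet_Ioc (by simp) (by simp) (C := 1) ?_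
  rintro ⟨t, u⟩ _
  have h := f1_bounds (t := t) (c := meas π (levelSet (rev P π) A u))
    (meas_nonneg' π hM.piPos _)
  rw [abs_of_nonneg h.1]
  exact h.2

lemma fubini2 (hM : IsMarkov P π) (hA0 : 0 < meas π A) (hA : meas π A ≤ 1/2) :
    ∫ t in Set.Ioc (meas π A) (1:ℝ),
        (∫ u in Set.Ioo (0:ℝ) (1/2),
          max (meas π (levelSet (rev P π) A u) - t) 0 / t) =
    ∫ u in Set.Ioo (0:ℝ) (1/2),
        (∫ t in Set.Ioc (meas π A) (1:ℝ),
          max (meas π (levelSet (rev P π) A u) - t) 0 / t) := by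
  refine MeasureTheory.integral_integral_swap ?_
  refine integrable_prod_of_bdd (f2_measurable P π A hM.piPos) measurableSet_Ioc
    measurableSet_Ioo (by simp) (by simp) (C := 1 / meas π A) ?_
  rintro ⟨t, u⟩ hp
  have h := f2_bounds (t := t) (c := meas π (levelSet (rev P π) A u))
    (meas_nonneg' π hM.piPos _) (meas_le_one π hM.piPos hM.piSum _) hA0 hp.1.1
  rw [abs_of_nonneg h.1]
  exact h.2


lemma inner1 {c m : ℝ} (h0 : 0 ≤ c) (hcm : c ≤ m) (hm : 0 < m) :
    ∫ t in Set.Ioc (0:ℝ) m, max (t - c) 0 / t = m - c + c * Real.log (c / m) := by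
  rcases eq_or_lt_of_le h0 with hc0 | hc0
  · -- c = 0
    rw [← hc0]
    rw [MeasureTheory.setIntegral_congr_fun measurableSet_Ioc
      (g := fun _ : ℝ => (1:ℝ)) ?_]
    · rw [MeasureTheory.setIntegral_const, Real.volume_real_Ioc_of_le (by linarith), smul_eq_mul]
      simp
    · intro t ht
      simp only
      rw [sub_zero, max_eq_left ht.1.le, div_self ht.1.ne']
  · -- 0 < c
    have hsplit : Set.Ioc (0:ℝ) m = Set.Ioc 0 c ∪ Set.Ioc c m :=
      (Set.Ioc_union_Ioc_eq_Ioc h0 hcm).symm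
    have hi1 : MeasureTheory.IntegrableOn (fun t : ℝ => max (t - c) 0 / t)
        (Set.Ioc (0:ℝ) c) := by
      refine integrableOn_of_bdd ?_ measurableSet_Ioc (by simp) (C := 1) ?_
      · exact ((measurable_id.sub measurable_const).max measurable_const).div measurable_id
      · intro x _
        have := f1_bounds (t := x) (c := c) h0
        rw [abs_of_nonneg this.1]; exact this.2
    have hi2 : MeasureTheory.IntegrableOn (fun t : ℝ => max (t - c) 0 / t)
        (Set.Ioc c m) := by
      refine integrableOn_of_bdd ?_ measurableSet_Ioc (by simp) (C := 1) ?_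
      · exact ((measurable_id.sub measurable_const).max measurable_const).div measurable_id
      · intro x _
        have := f1_bounds (t := x) (c := c) h0
        rw [abs_of_nonneg this.1]; exact this.2
    rw [hsplit, MeasureTheory.setIntegral_union (Set.Ioc_disjoint_Ioc_of_le le_rfl)
      measurableSet_Ioc hi1 hi2]
    have hz : ∫ t in Set.Ioc (0:ℝ) c, max (t - c) 0 / t = 0 := by
      rw [MeasureTheory.setIntegral_congr_fun measurableSet_Ioc
        (g := fun _ : ℝ => (0:ℝ)) ?_]
      · simp
      · intro t ht
        simp only
        rw [max_eq_right (by linarith [ht.2] : t - c ≤ 0), zero_div]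
    have hmain : ∫ t in Set.Ioc c m, max (t - c) 0 / t =
        (m - c) - c * Real.log (m / c) := by
      rw [MeasureTheory.setIntegral_congr_fun measurableSet_Ioc
        (g := fun t : ℝ => 1 - c * (1 / t)) ?_]
      · rw [← intervalIntegral.integral_of_le hcm]
        have hii : IntervalIntegrable (fun t : ℝ => c * (1 / t))
            MeasureTheory.volume c m := by
          refine IntervalIntegrable.const_mul ?_ c
          refine intervalIntegral.intervalIntegrable_one_div (fun x hx => ?_) continuousOn_id
          rw [Set.uIcc_of_le hcm] at hx
          exact (lt_of_lt_of_le hc0 hx.1).ne'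
        rw [intervalIntegral.integral_sub (intervalIntegrable_const) hii,
          intervalIntegral.integral_const, intervalIntegral.integral_const_mul,
          integral_one_div (by rw [Set.uIcc_of_le hcm]; intro h; exact absurd h.1 (by linarith))]
        simp only [smul_eq_mul, mul_one]
      · intro t ht
        simp only
        have ht0 : (0:ℝ) < t := lt_trans hc0 ht.1
        rw [max_eq_left (by linarith [ht.1] : 0 ≤ t - c), sub_div, div_self ht0.ne',
          mul_one_div]
    rw [hz, hmain, zero_add, Real.log_div hc0.ne' hm.ne', Real.log_div hm.ne' hc0.ne']
    ring

lemma inner2 {c m : ℝ} (hmc : m ≤ c) (hc1 : c ≤ 1) (hm : 0 < m) :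
    ∫ t in Set.Ioc m (1:ℝ), max (c - t) 0 / t = c * Real.log (c / m) - (c - m) := by
  have hc0 : 0 < c := lt_of_lt_of_le hm hmc
  have hsplit : Set.Ioc m (1:ℝ) = Set.Ioc m c ∪ Set.Ioc c 1 :=
    (Set.Ioc_union_Ioc_eq_Ioc hmc hc1).symm
  have hbd : ∀ x ∈ Set.Ioc m (1:ℝ), |max (c - x) 0 / x| ≤ 1/m := by
    intro x hx
    have := f2_bounds (t := x) (c := c) hc0.le hc1 hm hx.1
    rw [abs_of_nonneg this.1]; exact this.2
  have hmeas : Measurable (fun t : ℝ => max (c - t) 0 / t) :=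
    ((measurable_const.sub measurable_id).max measurable_const).div measurable_id
  have hi1 : MeasureTheory.IntegrableOn (fun t : ℝ => max (c - t) 0 / t)
      (Set.Ioc m c) := by
    refine integrableOn_of_bdd hmeas measurableSet_Ioc (by simp) (C := 1/m) ?_
    intro x hx
    exact hbd x ⟨hx.1, le_trans hx.2 hc1⟩
  have hi2 : MeasureTheory.IntegrableOn (fun t : ℝ => max (c - t) 0 / t)
      (Set.Ioc c 1) := by
    refine integrableOn_of_bdd hmeas measurableSet_Ioc (by simp) (C := 1/m) ?_
    intro x hx
    exact hbd x ⟨lt_of_le_of_lt hmc hx.1, hx.2⟩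
  rw [hsplit, MeasureTheory.setIntegral_union (Set.Ioc_disjoint_Ioc_of_le le_rfl)
    measurableSet_Ioc hi1 hi2]
  have hz : ∫ t in Set.Ioc c (1:ℝ), max (c - t) 0 / t = 0 := by
    rw [MeasureTheory.setIntegral_congr_fun measurableSet_Ioc
      (g := fun _ : ℝ => (0:ℝ)) ?_]
    · simp
    · intro t ht
      simp only
      rw [max_eq_right (by linarith [ht.1] : c - t ≤ 0), zero_div]
  have hmain : ∫ t in Set.Ioc m c, max (c - t) 0 / t =
      c * Real.log (c / m) - (c - m) := by
    rw [MeasureTheory.setIntegral_congr_fun measurableSet_Ioc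
      (g := fun t : ℝ => c * (1 / t) - 1) ?_]
    · rw [← intervalIntegral.integral_of_le hmc]
      have hii : IntervalIntegrable (fun t : ℝ => c * (1 / t))
          MeasureTheory.volume m c := by
        refine IntervalIntegrable.const_mul ?_ c
        refine intervalIntegral.intervalIntegrable_one_div (fun x hx => ?_) continuousOn_id
        rw [Set.uIcc_of_le hmc] at hx
        exact (lt_of_lt_of_le hm hx.1).ne'
      rw [intervalIntegral.integral_sub hii (intervalIntegrable_const),
        intervalIntegral.integral_const, intervalIntegral.integral_const_mul,
        integral_one_div (by rw [Set.uIcc_of_le hmc]; intro h; exact absurd h.1 (by linarith))]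
      simp only [smul_eq_mul, mul_one]
    · intro t ht
      simp only
      have ht0 : (0:ℝ) < t := lt_trans hm ht.1
      rw [max_eq_left (by linarith [ht.2] : 0 ≤ c - t), sub_div, div_self ht0.ne',
        mul_one_div]
  rw [hz, hmain, add_zero]


lemma G_cont {m : ℝ} (hm : 0 < m) : Continuous (fun x : ℝ => x * Real.log (x / m)) := by
  have heq : (fun x : ℝ => x * Real.log (x / m)) =
      fun x => x * Real.log x - x * Real.log m := by
    funext x
    rcases eq_or_ne x 0 with hx | hx
    · simp [hx]
    · rw [Real.log_div hx hm.ne']; ring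
  rw [heq]
  exact Real.continuous_mul_log.sub (continuous_id.mul continuous_const)

lemma G_measurable (hpos : ∀ v, 0 < π v) {m : ℝ} (hm : 0 < m) :
    Measurable (fun u : ℝ => meas π (levelSet (rev P π) A u) *
      Real.log (meas π (levelSet (rev P π) A u) / m)) :=
  (G_cont hm).measurable.comp (aFun_measurable P π A hpos)

lemma G_integrableOn (hM : IsMarkov P π) {m : ℝ} (hm : 0 < m) {s : Set ℝ}
    (hs : MeasurableSet s) (hμ : MeasureTheory.volume s ≠ ⊤) :
    MeasureTheory.IntegrableOn (fun u : ℝ => meas π (levelSet (rev P π) A u) *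
      Real.log (meas π (levelSet (rev P π) A u) / m)) s := by
  obtain ⟨C, hC⟩ := (isCompact_Icc (a := (0:ℝ)) (b := 1)).exists_bound_of_continuousOn
    (G_cont hm).continuousOn
  refine integrableOn_of_bdd (G_measurable P π A hM.piPos hm) hs hμ (C := C) ?_
  intro x _
  have := hC (meas π (levelSet (rev P π) A x))
    ⟨meas_nonneg' π hM.piPos _, meas_le_one π hM.piPos hM.piSum _⟩
  rw [Real.norm_eq_abs] at this
  exact this

lemma a_integrableOn (hM : IsMarkov P π) {s : Set ℝ}
    (hs : MeasurableSet s) (hμ : MeasureTheory.volume s ≠ ⊤) :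
    MeasureTheory.IntegrableOn (fun u : ℝ => meas π (levelSet (rev P π) A u)) s := by
  refine integrableOn_of_bdd (aFun_measurable P π A hM.piPos) hs hμ (C := 1) ?_
  intro x _
  rw [abs_of_nonneg (meas_nonneg' π hM.piPos _)]
  exact meas_le_one π hM.piPos hM.piSum _

lemma a_total (hM : IsMarkov P π) :
    ∫ u in Set.Ioc (0:ℝ) 1, meas π (levelSet (rev P π) A u) = meas π A := by
  have h := sum_eq_integral_levelSet P π A hM π
  rw [sum_pi_setProb P π A hM] at h
  rw [h]
  rfl

lemma M1_integrableOn (hM : IsMarkov P π) :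
    MeasureTheory.IntegrableOn (fun t : ℝ => ∫ u in Set.Ioc (1/2:ℝ) 1,
      max (t - meas π (levelSet (rev P π) A u)) 0 / t) (Set.Ioc (0:ℝ) (meas π A)) := by
  have hmeas : Measurable (fun t : ℝ => ∫ u in Set.Ioc (1/2:ℝ) 1,
      max (t - meas π (levelSet (rev P π) A u)) 0 / t) :=
    ((f1_measurable P π A hM.piPos).stronglyMeasurable.integral_prod_right').measurable
  refine integrableOn_of_bdd hmeas measurableSet_Ioc (by simp) (C := 1 * ((1:ℝ)/2)) ?_
  intro t _
  have hb : ‖∫ u in Set.Ioc (1/2:ℝ) 1,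
      max (t - meas π (levelSet (rev P π) A u)) 0 / t‖ ≤ 1 * (MeasureTheory.volume (Set.Ioc (1/2:ℝ) 1)).toReal := by
    refine MeasureTheory.norm_setIntegral_le_of_norm_le_const (by simp) ?_
    · intro u _
      have h := f1_bounds (t := t) (c := meas π (levelSet (rev P π) A u))
        (meas_nonneg' π hM.piPos _)
      rw [Real.norm_eq_abs, abs_of_nonneg h.1]
      exact h.2
  rw [Real.norm_eq_abs] at hb
  rwa [Real.volume_Ioc, ENNReal.toReal_ofReal (by norm_num), show (1:ℝ) - 1/2 = 1/2 by norm_num] at hb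

lemma M2_integrableOn (hM : IsMarkov P π) (hA0 : 0 < meas π A) :
    MeasureTheory.IntegrableOn (fun t : ℝ => ∫ u in Set.Ioo (0:ℝ) (1/2),
      max (meas π (levelSet (rev P π) A u) - t) 0 / t) (Set.Ioc (meas π A) 1) := by
  have hmeas : Measurable (fun t : ℝ => ∫ u in Set.Ioo (0:ℝ) (1/2),
      max (meas π (levelSet (rev P π) A u) - t) 0 / t) :=
    ((f2_measurable P π A hM.piPos).stronglyMeasurable.integral_prod_right').measurable
  refine integrableOn_of_bdd hmeas measurableSet_Ioc (by simp)
    (C := 1 / meas π A * ((1:ℝ)/2)) ?_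
  intro t ht
  have hb : ‖∫ u in Set.Ioo (0:ℝ) (1/2),
      max (meas π (levelSet (rev P π) A u) - t) 0 / t‖ ≤
        1 / meas π A * (MeasureTheory.volume (Set.Ioo (0:ℝ) (1/2))).toReal := by
    refine MeasureTheory.norm_setIntegral_le_of_norm_le_const (by simp) ?_
    · intro u _
      have h := f2_bounds (t := t) (c := meas π (levelSet (rev P π) A u))
        (meas_nonneg' π hM.piPos _) (meas_le_one π hM.piPos hM.piSum _) hA0 ht.1
      rw [Real.norm_eq_abs, abs_of_nonneg h.1]
      exact h.2
  rw [Real.norm_eq_abs] at hb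
  rwa [Real.volume_Ioo, ENNReal.toReal_ofReal (by norm_num), show (1:ℝ)/2 - 0 = 1/2 by norm_num] at hb

end Aux

















/-- `ψ̄_mod(A) ≥ ∫₀¹ (π(A_u)/π(A))·log(π(A_u)/π(A)) du`
(with the convention `0·log 0 = 0`, automatic since `Real.log 0 = 0`). -/
theorem modified_spread_ge_entropy_integral
    (P : K → K → ℝ) (π : K → ℝ) (A : Finset K)
    (hM : IsMarkov P π) (hlazy : IsLazy P)
    (hirr : MCIrreducible P) (hap : MCAperiodic P)
    (hA0 : 0 < meas π A) (hA : meas π A ≤ 1 / 2) :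
    psiMod (rev P π) π A ≥
      ∫ u in (0:ℝ)..(1:ℝ),
        (meas π (levelSet (rev P π) A u) / meas π A) *
          Real.log (meas π (levelSet (rev P π) A u) / meas π A) := by
  classical
  have hm1 : meas π A ≤ 1 := le_trans hA (by norm_num)
  -- notation
  set G : ℝ → ℝ := fun u => meas π (levelSet (rev P π) A u) *
    Real.log (meas π (levelSet (rev P π) A u) / meas π A) with hG
  -- split of the main integral
  have hIsplit : ∫ t in Set.Ioc (0:ℝ) 1, Psi (rev P π) π A t / min t (1 - t) =
      (∫ t in Set.Ioc (0:ℝ) (meas π A), Psi (rev P π) π A t / min t (1 - t)) +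
      ∫ t in Set.Ioc (meas π A) 1, Psi (rev P π) π A t / min t (1 - t) := by
    rw [← Set.Ioc_union_Ioc_eq_Ioc hA0.le hm1,
      MeasureTheory.setIntegral_union (Set.Ioc_disjoint_Ioc_of_le le_rfl) measurableSet_Ioc
        (psi_div_integrable1 P π A hM hA0 hA) (psi_div_integrable2 P π A hM hA0 hA)]
  -- lower bound on piece 1
  have hB1 : ∫ t in Set.Ioc (0:ℝ) (meas π A),
      (∫ u in Set.Ioc (1/2:ℝ) 1, max (t - meas π (levelSet (rev P π) A u)) 0 / t) ≤
      ∫ t in Set.Ioc (0:ℝ) (meas π A), Psi (rev P π) π A t / min t (1 - t) := by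
    refine MeasureTheory.setIntegral_mono_on (M1_integrableOn P π A hM)
      (psi_div_integrable1 P π A hM hA0 hA) measurableSet_Ioc ?_
    intro t ht
    have hmin : min t (1 - t) = t := min_eq_left (by linarith [ht.2, hA])
    rw [hmin, MeasureTheory.integral_div]
    have hle := psi_lb1 P π A hM hlazy hA0 ht.1.le ht.2
    gcongr
    exact ht.1.le
  -- lower bound on piece 2
  have hB2 : ∫ t in Set.Ioc (meas π A) 1,
      (∫ u in Set.Ioo (0:ℝ) (1/2), max (meas π (levelSet (rev P π) A u) - t) 0 / t) ≤
      ∫ t in Set.Ioc (meas π A) 1, Psi (rev P π) π A t / min t (1 - t) := by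
    refine MeasureTheory.setIntegral_mono_on (M2_integrableOn P π A hM hA0)
      (psi_div_integrable2 P π A hM hA0 hA) measurableSet_Ioc ?_
    intro t ht
    have ht0 : 0 < t := lt_trans hA0 ht.1
    have hpsi0 : 0 ≤ Psi (rev P π) π A t := psi_nonneg2 P π A hM hA ht.2 ht.1
    rcases eq_or_lt_of_le ht.2 with h1 | h1
    · -- t = 1
      have hz : ∫ u in Set.Ioo (0:ℝ) (1/2),
          max (meas π (levelSet (rev P π) A u) - t) 0 / t = 0 := by
        rw [MeasureTheory.setIntegral_congr_fun measurableSet_Ioo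
          (g := fun _ : ℝ => (0:ℝ)) ?_]
        · simp
        · intro u _
          simp only
          have hle1 := meas_le_one π hM.piPos hM.piSum (levelSet (rev P π) A u)
          rw [max_eq_right (by rw [h1]; linarith), zero_div]
      rw [hz]
      exact div_nonneg hpsi0 (le_min ht0.le (by linarith))
    · -- t < 1
      have hle := psi_lb2 P π A hM hlazy hA ht.2 ht.1
      have hmin_pos : 0 < min t (1 - t) := lt_min ht0 (by linarith)
      have hmin_le : min t (1 - t) ≤ t := min_le_left _ _
      rw [MeasureTheory.integral_div]
      calc (∫ u in Set.Ioo (0:ℝ) (1/2),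
            max (meas π (levelSet (rev P π) A u) - t) 0) / t ≤
          Psi (rev P π) π A t / t := by gcongr
        _ ≤ Psi (rev P π) π A t / min t (1 - t) := by gcongr
  -- Fubini + inner integral, piece 1
  have hC1 : ∫ t in Set.Ioc (0:ℝ) (meas π A),
      (∫ u in Set.Ioc (1/2:ℝ) 1, max (t - meas π (levelSet (rev P π) A u)) 0 / t) =
      ∫ u in Set.Ioc (1/2:ℝ) 1,
        (meas π A - meas π (levelSet (rev P π) A u) + G u) := by
    rw [fubini1 P π A hM hA0]
    refine MeasureTheory.setIntegral_congr_fun measurableSet_Ioc ?_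
    intro u hu
    simp only [hG]
    exact inner1 (meas_nonneg' π hM.piPos _)
      (meas_mono' π hM.piPos (levelSet_subset P π A hM hlazy hu.1.le)) hA0
  -- Fubini + inner integral, piece 2
  have hC2 : ∫ t in Set.Ioc (meas π A) 1,
      (∫ u in Set.Ioo (0:ℝ) (1/2), max (meas π (levelSet (rev P π) A u) - t) 0 / t) =
      ∫ u in Set.Ioo (0:ℝ) (1/2),
        (G u - (meas π (levelSet (rev P π) A u) - meas π A)) := by
    rw [fubini2 P π A hM hA0 hA]
    refine MeasureTheory.setIntegral_congr_fun measurableSet_Ioo ?_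
    intro u hu
    simp only [hG]
    exact inner2 (meas_mono' π hM.piPos (subset_levelSet P π A hM hlazy hu.2))
      (meas_le_one π hM.piPos hM.piSum _) hA0
  -- integrability facts for the combination step
  have hGI2 : MeasureTheory.IntegrableOn G (Set.Ioc (1/2:ℝ) 1) :=
    G_integrableOn P π A hM hA0 measurableSet_Ioc (by simp)
  have hGI1 : MeasureTheory.IntegrableOn G (Set.Ioc (0:ℝ) (1/2)) :=
    G_integrableOn P π A hM hA0 measurableSet_Ioc (by simp)
  have hGI1' : MeasureTheory.IntegrableOn G (Set.Ioo (0:ℝ) (1/2)) :=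
    G_integrableOn P π A hM hA0 measurableSet_Ioo (by simp)
  have haI2 : MeasureTheory.IntegrableOn
      (fun u : ℝ => meas π (levelSet (rev P π) A u)) (Set.Ioc (1/2:ℝ) 1) :=
    a_integrableOn P π A hM measurableSet_Ioc (by simp)
  have haI1' : MeasureTheory.IntegrableOn
      (fun u : ℝ => meas π (levelSet (rev P π) A u)) (Set.Ioo (0:ℝ) (1/2)) :=
    a_integrableOn P π A hM measurableSet_Ioo (by simp)
  -- compute X1
  have hc2 : MeasureTheory.IntegrableOn (fun _ : ℝ => meas π A) (Set.Ioc (1/2:ℝ) 1) :=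
    MeasureTheory.integrableOn_const (by simp)
  have hsub2 : MeasureTheory.IntegrableOn
      (fun u : ℝ => meas π A - meas π (levelSet (rev P π) A u)) (Set.Ioc (1/2:ℝ) 1) :=
    hc2.sub haI2
  have hc1 : MeasureTheory.IntegrableOn (fun _ : ℝ => meas π A) (Set.Ioo (0:ℝ) (1/2)) :=
    MeasureTheory.integrableOn_const (by simp)
  have hsub1 : MeasureTheory.IntegrableOn
      (fun u : ℝ => meas π (levelSet (rev P π) A u) - meas π A) (Set.Ioo (0:ℝ) (1/2)) :=
    haI1'.sub hc1
  have hX1 : ∫ u in Set.Ioc (1/2:ℝ) 1,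
      (meas π A - meas π (levelSet (rev P π) A u) + G u) =
      (meas π A * (1/2) - ∫ u in Set.Ioc (1/2:ℝ) 1, meas π (levelSet (rev P π) A u)) +
      ∫ u in Set.Ioc (1/2:ℝ) 1, G u := by
    rw [MeasureTheory.integral_add hsub2 hGI2,
      MeasureTheory.integral_sub hc2 haI2,
      MeasureTheory.setIntegral_const, Real.volume_real_Ioc_of_le (by norm_num), smul_eq_mul]
    norm_num [mul_comm]
  -- compute X2
  have hX2 : ∫ u in Set.Ioo (0:ℝ) (1/2),
      (G u - (meas π (levelSet (rev P π) A u) - meas π A)) =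
      (∫ u in Set.Ioo (0:ℝ) (1/2), G u) -
      ((∫ u in Set.Ioo (0:ℝ) (1/2), meas π (levelSet (rev P π) A u)) -
        meas π A * (1/2)) := by
    rw [MeasureTheory.integral_sub hGI1' hsub1,
      MeasureTheory.integral_sub haI1' hc1,
      MeasureTheory.setIntegral_const, Real.volume_real_Ioo_of_le (by norm_num), smul_eq_mul]
    norm_num [mul_comm]
  -- splits of the u-integrals over (0,1]
  have hGsplit : ∫ u in Set.Ioc (0:ℝ) 1, G u =
      (∫ u in Set.Ioc (0:ℝ) (1/2), G u) + ∫ u in Set.Ioc (1/2:ℝ) 1, G u := by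
    rw [← Set.Ioc_union_Ioc_eq_Ioc (by norm_num : (0:ℝ) ≤ 1/2) (by norm_num : (1:ℝ)/2 ≤ 1),
      MeasureTheory.setIntegral_union (Set.Ioc_disjoint_Ioc_of_le le_rfl) measurableSet_Ioc hGI1 hGI2]
  have hasplit : ∫ u in Set.Ioc (0:ℝ) 1, meas π (levelSet (rev P π) A u) =
      (∫ u in Set.Ioc (0:ℝ) (1/2), meas π (levelSet (rev P π) A u)) +
      ∫ u in Set.Ioc (1/2:ℝ) 1, meas π (levelSet (rev P π) A u) := by
    rw [← Set.Ioc_union_Ioc_eq_Ioc (by norm_num : (0:ℝ) ≤ 1/2) (by norm_num : (1:ℝ)/2 ≤ 1),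
      MeasureTheory.setIntegral_union (Set.Ioc_disjoint_Ioc_of_le le_rfl) measurableSet_Ioc
        (a_integrableOn P π A hM measurableSet_Ioc (by simp)) haI2]
  have hGoo : ∫ u in Set.Ioc (0:ℝ) (1/2), G u = ∫ u in Set.Ioo (0:ℝ) (1/2), G u :=
    MeasureTheory.integral_Ioc_eq_integral_Ioo
  have haoo : ∫ u in Set.Ioc (0:ℝ) (1/2), meas π (levelSet (rev P π) A u) =
      ∫ u in Set.Ioo (0:ℝ) (1/2), meas π (levelSet (rev P π) A u) :=
    MeasureTheory.integral_Ioc_eq_integral_Ioo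
  have hatotal := a_total P π A hM
  -- the key inequality
  have hkey : ∫ u in Set.Ioc (0:ℝ) 1, G u ≤
      ∫ t in Set.Ioc (0:ℝ) 1, Psi (rev P π) π A t / min t (1 - t) := by
    rw [hIsplit]
    have h1 := le_trans (le_of_eq hC1.symm) hB1
    have h2 := le_trans (le_of_eq hC2.symm) hB2
    linarith [h1, h2]
  -- final conversion
  rw [ge_iff_le, psiMod, intervalIntegral.integral_of_le (zero_le_one),
    intervalIntegral.integral_of_le (zero_le_one)]
  have hRHS : ∫ u in Set.Ioc (0:ℝ) 1,
      (meas π (levelSet (rev P π) A u) / meas π A) *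
        Real.log (meas π (levelSet (rev P π) A u) / meas π A) =
      (∫ u in Set.Ioc (0:ℝ) 1, G u) / meas π A := by
    rw [← MeasureTheory.integral_div]
    refine MeasureTheory.setIntegral_congr_fun measurableSet_Ioc ?_
    intro u _
    simp only [hG]
    rw [div_mul_eq_mul_div]
  rw [hRHS]
  gcongr
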